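/- arXiv:2310.01771 — 3 statements merged into one kernel-verified Lean document; each statement's English description precedes it below -/
import Mathlib

section
/- Let H be a hypergraph and H_B^φ a 2-fold covering determined by a voltage assignment φ: each incidence (v,e) is assigned an element φ(e,v) ∈ S_2, recorded as a sign sgn φ(v,e) ∈ {±1}. Define the incidence-signed adjacency matrix A(H,φ) by A(H,φ)_{uv} = Σ_{e : {u,v} ⊆ e} sgn φ(u,e)·sgn φ(v,e) for u ≠ v, and 0 on the diagonal. Then the spectrum of A(H_B^φ) is the multiset union of the spectrum of A(H) and the spectrum of A(H,φ). -/
open Matrix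

section Aux

open Polynomial

theorem charpoly_conj_aux' {n R : Type*} [Fintype n] [DecidableEq n] [CommRing R]
    (P M Q : Matrix n n R) (h : P * Q = 1) :
    (P * M * Q).charpoly = M.charpoly := by
  have hmap : (P.map C) * (Q.map C) = 1 := by
    rw [← Matrix.map_mul, h, Matrix.map_one _ (map_zero C) (map_one C)]
  have hch : charmatrix (P * M * Q) = P.map C * charmatrix M * Q.map C := by
    have hs : (Matrix.scalar n (X : R[X])) = (X : R[X]) • (1 : Matrix n n R[X]) := by
      rw [Matrix.smul_one_eq_diagonal]; rfl
    rw [charmatrix, charmatrix, mul_sub, sub_mul, hs]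
    congr 1
    · rw [mul_smul_comm, mul_one, smul_mul_assoc, hmap]
    · simp [RingHom.mapMatrix_apply, Matrix.map_mul]
  rw [Matrix.charpoly, hch, det_mul, det_mul, Matrix.charpoly]
  have : (P.map C).det * (Q.map C).det = 1 := by
    rw [← det_mul, hmap, det_one]
  rw [mul_comm ((P.map C).det) _, mul_assoc, this, mul_one]

/-- The equivalence `V × Fin 2 ≃ V ⊕ V`. -/
def prodFinTwoEquivSum (V : Type*) : V × Fin 2 ≃ V ⊕ V where
  toFun p := if p.2 = 0 then Sum.inl p.1 else Sum.inr p.1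
  invFun := Sum.elim (fun u => (u, 0)) (fun u => (u, 1))
  left_inv := by rintro ⟨u, i⟩; fin_cases i <;> simp
  right_inv := by rintro (u | u) <;> simp

@[simp] lemma prodFinTwoEquivSum_apply0 {V : Type*} (u : V) :
    prodFinTwoEquivSum V (u, 0) = Sum.inl u := rfl

@[simp] lemma prodFinTwoEquivSum_apply1 {V : Type*} (u : V) :
    prodFinTwoEquivSum V (u, 1) = Sum.inr u := rfl

end Aux

/-- For a hypergraph `H` and a 2-fold covering `H_B^φ` determined by a
voltage assignment `φ` into `S₂` (with signs `sgn φ(v,e)`), the spectrum of the cover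
is the multiset union of the spectrum of `A(H)` and the spectrum of the
incidence-signed adjacency matrix `A(H,φ)`; equivalently the characteristic
polynomials multiply. -/
theorem two_cover_spectrum_union
    {V E : Type*} [Fintype V] [Fintype E] [DecidableEq V]
    (edges : E → Finset V)
    (φ : E → V → Equiv.Perm (Fin 2))
    (A : Matrix V V ℝ)
    (hA : ∀ u w, A u w = if u = w then 0 else
      ((Finset.univ.filter fun e => u ∈ edges e ∧ w ∈ edges e).card : ℝ))
    (Asgn : Matrix V V ℝ)
    (hAsgn : ∀ u w, Asgn u w = if u = w then 0 else
      ∑ e ∈ Finset.univ.filter (fun e => u ∈ edges e ∧ w ∈ edges e),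
        (((Equiv.Perm.sign (φ e u) : ℤ) : ℝ) * ((Equiv.Perm.sign (φ e w) : ℤ) : ℝ)))
    (Acov : Matrix (V × Fin 2) (V × Fin 2) ℝ)
    (hAcov : ∀ u i v j, Acov (u, i) (v, j) = if (u, i) = (v, j) then 0 else
      ((Finset.univ.filter fun e =>
        u ∈ edges e ∧ v ∈ edges e ∧ φ e u i = φ e v j).card : ℝ)) :
    Acov.charpoly = A.charpoly * Asgn.charpoly := by
  classical
  have l1 : ∀ σ τ : Equiv.Perm (Fin 2), (σ 1 = τ 1) ↔ (σ 0 = τ 0) := by decide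
  have l2 : ∀ σ τ : Equiv.Perm (Fin 2), (σ 1 = τ 0) ↔ (σ 0 = τ 1) := by decide
  have l3 : ∀ σ : Equiv.Perm (Fin 2), ¬ (σ 0 = σ 1) := by decide
  have l4 : ∀ σ τ : Equiv.Perm (Fin 2),
      ((Equiv.Perm.sign σ : ℤ) * (Equiv.Perm.sign τ : ℤ))
        = if σ 0 = τ 0 then 1 else -1 := by decide
  have l5 : ∀ σ τ : Equiv.Perm (Fin 2), (σ 0 = τ 1) ↔ ¬(σ 0 = τ 0) := by decide
  set S : Matrix V V ℝ := Matrix.of fun u v => Acov (u, 0) (v, 0) with hSdef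
  set D : Matrix V V ℝ := Matrix.of fun u v => Acov (u, 0) (v, 1) with hDdef
  have hS : ∀ u v, S u v = if u = v then 0 else
      ((Finset.univ.filter fun e => u ∈ edges e ∧ v ∈ edges e ∧ φ e u 0 = φ e v 0).card : ℝ) := by
    intro u v
    simp [hSdef, hAcov, Prod.ext_iff]
  have hD : ∀ u v, D u v =
      ((Finset.univ.filter fun e => u ∈ edges e ∧ v ∈ edges e ∧ φ e u 0 = φ e v 1).card : ℝ) := by
    intro u v
    simp [hDdef, hAcov, Prod.ext_iff]
  -- rewrite filters as nested filters
  have hff : ∀ (u v : V) (r : E → Prop) [DecidablePred r],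
      (Finset.univ.filter fun e => u ∈ edges e ∧ v ∈ edges e ∧ r e)
        = (Finset.univ.filter fun e => u ∈ edges e ∧ v ∈ edges e).filter r := by
    intro u v r _
    rw [Finset.filter_filter]
    simp [and_assoc]
  have hA' : A = S + D := by
    ext u v
    rw [Matrix.add_apply, hA, hS u v, hD u v]
    by_cases h : u = v
    · subst h
      simp [l3]
    · rw [if_neg h, if_neg h]
      have hsplit :
          (Finset.univ.filter fun e => u ∈ edges e ∧ v ∈ edges e).card
            = (Finset.univ.filter fun e =>
                u ∈ edges e ∧ v ∈ edges e ∧ φ e u 0 = φ e v 0).card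
            + (Finset.univ.filter fun e =>
                u ∈ edges e ∧ v ∈ edges e ∧ φ e u 0 = φ e v 1).card := by
        simp only [l5]
        rw [hff u v (fun e => φ e u 0 = φ e v 0),
          hff u v (fun e => ¬ (φ e u 0 = φ e v 0))]
        exact (Finset.card_filter_add_card_filter_not _).symm
      rw [hsplit]
      push_cast
      ring
  have hAsgn' : Asgn = S - D := by
    ext u v
    rw [Matrix.sub_apply, hAsgn, hS u v, hD u v]
    by_cases h : u = v
    · subst h
      simp [l3]
    · rw [if_neg h, if_neg h]
      have hterm : ∀ e, (((Equiv.Perm.sign (φ e u) : ℤ) : ℝ))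
          * (((Equiv.Perm.sign (φ e v) : ℤ) : ℝ))
          = if φ e u 0 = φ e v 0 then (1 : ℝ) else -1 := by
        intro e
        rw [← Int.cast_mul, l4]
        split_ifs <;> simp
      rw [Finset.sum_congr rfl fun e _ => hterm e, Finset.sum_ite,
        Finset.sum_const, Finset.sum_const]
      simp only [l5, nsmul_eq_mul, mul_one, mul_neg]
      rw [← hff u v (fun e => φ e u 0 = φ e v 0),
        ← hff u v (fun e => ¬ (φ e u 0 = φ e v 0))]
      ring
  have hM : ∀ u i v j, Acov (u, i) (v, j) = if i = j then S u v else D u v := by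
    intro u i v j
    fin_cases i <;> fin_cases j
    · rw [if_pos rfl]; rfl
    · rw [if_neg (by decide)]; rfl
    · rw [if_neg (by decide), hD u v, hAcov]
      rw [if_neg (by simp [Prod.ext_iff, Fin.ext_iff])]
      simp only [Fin.mk_zero, Fin.mk_one, l2]
    · rw [if_pos rfl, hAcov, hS u v]
      simp only [Fin.mk_zero, Fin.mk_one, Prod.mk.injEq, and_true, l1]
  have hcov : Acov = (fromBlocks S D D S).submatrix (prodFinTwoEquivSum V)
      (prodFinTwoEquivSum V) := by
    ext ⟨u, i⟩ ⟨v, j⟩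
    rw [Matrix.submatrix_apply, hM]
    fin_cases i <;> fin_cases j <;> simp
  have hre : Acov.charpoly = (fromBlocks S D D S).charpoly := by
    rw [hcov]
    have : (fromBlocks S D D S).submatrix (prodFinTwoEquivSum V) (prodFinTwoEquivSum V)
        = reindex (prodFinTwoEquivSum V).symm (prodFinTwoEquivSum V).symm
            (fromBlocks S D D S) := by
      rw [Matrix.reindex_apply, Equiv.symm_symm]
    rw [this, Matrix.charpoly_reindex]
  set c : Matrix V V ℝ := (2⁻¹ : ℝ) • 1 with hc
  set P : Matrix (V ⊕ V) (V ⊕ V) ℝ := fromBlocks 1 1 1 (-1) with hP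
  set Q : Matrix (V ⊕ V) (V ⊕ V) ℝ := fromBlocks c c c (-c) with hQ
  have hcc : c + c = 1 := by
    rw [hc, ← add_smul]; norm_num
  have hQP : Q * P = 1 := by
    rw [hQ, hP, Matrix.fromBlocks_multiply, ← Matrix.fromBlocks_one]
    simp only [Matrix.mul_one, Matrix.mul_neg, Matrix.neg_mul, neg_neg,
      add_neg_cancel, neg_add_cancel, hcc]
  have hkey : fromBlocks S D D S = Q * fromBlocks (S + D) 0 0 (S - D) * P := by
    rw [hQ, hP, Matrix.fromBlocks_multiply, Matrix.fromBlocks_multiply]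
    rw [Matrix.fromBlocks_inj]
    simp only [hc, Matrix.mul_zero, Matrix.zero_mul, Matrix.mul_one, Matrix.mul_neg,
      Matrix.neg_mul, add_zero, zero_add, neg_neg, smul_mul_assoc, Matrix.one_mul]
    refine ⟨?_, ?_, ?_, ?_⟩ <;> module
  rw [hre, hkey, charpoly_conj_aux' Q _ P hQP, Matrix.charpoly_fromBlocks_zero₁₂,
    ← hA', ← hAsgn']
end

section
/- (Godsil–Gutman) Let G be a simple graph on n vertices with m edges. For a signing s ∈ {±1}^m, let A_s be the signed adjacency matrix (the adjacency matrix of G with the entry for edge e_i multiplied by s_i) and ψ_s(x) = det(xI − A_s). Then the average of ψ_s(x) over all 2^m signings s equals the matching polynomial μ_G(x) = Σ_{i≥0} (−1)^i m_i x^{n−2i}, where m_i is the number of i-edge matchings of G. -/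
set_option linter.unusedSectionVars false
set_option linter.unusedVariables false
set_option maxHeartbeats 1000000

open Matrix Polynomial
open scoped Classical

namespace GGaux

variable {V : Type*} [Fintype V] [DecidableEq V]

/-- The signed adjacency matrix. -/
noncomputable def A (G : SimpleGraph V) [DecidableRel G.Adj] (s : G.edgeFinset → Bool) :
    Matrix V V ℝ := fun u v =>
  if h : s(u, v) ∈ G.edgeFinset then (if s ⟨s(u, v), h⟩ then 1 else -1) else 0

/-- The matching predicate. -/
def IsM (G : SimpleGraph V) (M : Finset (Sym2 V)) : Prop :=
  M ⊆ G.edgeFinset ∧ ∀ a ∈ M, ∀ b ∈ M, a ≠ b → ∀ v : V, ¬(v ∈ a ∧ v ∈ b)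

variable {G : SimpleGraph V} [DecidableRel G.Adj]

lemma A_not_adj {u v : V} (h : ¬ G.Adj u v) (s : G.edgeFinset → Bool) : A G s u v = 0 := by
  rw [A, dif_neg]
  simp [SimpleGraph.mem_edgeFinset, h]

lemma A_diag (v : V) (s : G.edgeFinset → Bool) : A G s v v = 0 :=
  A_not_adj (G.irrefl) s

lemma A_symm (u v : V) (s : G.edgeFinset → Bool) : A G s u v = A G s v u := by
  have h : s(u, v) = s(v, u) := Sym2.eq_swap
  simp only [A, h]

lemma A_sq {u v : V} (h : G.Adj u v) (s : G.edgeFinset → Bool) :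
    A G s u v * A G s u v = 1 := by
  have hm : s(u, v) ∈ G.edgeFinset := by simp [SimpleGraph.mem_edgeFinset, h]
  rw [A, dif_pos hm]
  cases s ⟨s(u, v), hm⟩ <;> norm_num

noncomputable def flip (e0 : G.edgeFinset) (s : G.edgeFinset → Bool) : G.edgeFinset → Bool :=
  fun e => if e = e0 then !(s e) else s e

lemma flip_flip (e0 : G.edgeFinset) (s : G.edgeFinset → Bool) : flip e0 (flip e0 s) = s := by
  funext e
  by_cases h : e = e0 <;> simp [flip, h]

lemma flip_ne_self (e0 : G.edgeFinset) (s : G.edgeFinset → Bool) : flip e0 s ≠ s := by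
  intro h
  have := congrFun h e0
  simp [flip] at this

lemma A_flip_ne {u v : V} (e0 : G.edgeFinset) (s : G.edgeFinset → Bool)
    (h : s(u, v) ≠ (e0 : Sym2 V)) : A G (flip e0 s) u v = A G s u v := by
  rw [A, A]
  by_cases hm : s(u, v) ∈ G.edgeFinset
  · rw [dif_pos hm, dif_pos hm]
    have : (⟨s(u, v), hm⟩ : G.edgeFinset) ≠ e0 := fun hc => h (congrArg Subtype.val hc)
    simp [flip, this]
  · rw [dif_neg hm, dif_neg hm]

lemma A_flip_eq {u v : V} (e0 : G.edgeFinset) (s : G.edgeFinset → Bool)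
    (h : s(u, v) = (e0 : Sym2 V)) : A G (flip e0 s) u v = - A G s u v := by
  have hm : s(u, v) ∈ G.edgeFinset := h ▸ e0.2
  rw [A, A, dif_pos hm, dif_pos hm]
  have : (⟨s(u, v), hm⟩ : G.edgeFinset) = e0 := Subtype.ext h
  rw [flip, if_pos this]
  cases s ⟨s(u, v), hm⟩ <;> norm_num

lemma prod_charmatrix (σ : Equiv.Perm V) (s : G.edgeFinset → Bool) :
    ∏ v : V, charmatrix (A G s) (σ v) v
      = (∏ v ∈ σ.support, (-C (A G s (σ v) v))) * X ^ (Fintype.card V - σ.support.card) := by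
  rw [← Finset.prod_mul_prod_compl σ.support]
  congr 1
  · exact Finset.prod_congr rfl fun v hv =>
      charmatrix_apply_ne _ _ _ (Equiv.Perm.mem_support.mp hv)
  · have : ∀ v ∈ σ.supportᶜ, charmatrix (A G s) (σ v) v = (X : ℝ[X]) := by
      intro v hv
      have hfix : σ v = v := by
        simpa [Equiv.Perm.notMem_support] using (Finset.mem_compl.mp hv)
      rw [hfix, charmatrix_apply_eq, A_diag, map_zero, sub_zero]
    rw [Finset.prod_congr rfl this, Finset.prod_const, Finset.card_compl]

lemma prod_support_invol {σ : Equiv.Perm V}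
    (hadj : ∀ v ∈ σ.support, G.Adj (σ v) v) (hinv : Function.Involutive σ)
    (s : G.edgeFinset → Bool) :
    ∏ v ∈ σ.support, (-C (A G s (σ v) v)) = 1 := by
  refine Finset.prod_involution (fun v _ => σ v) ?_ ?_ ?_ ?_
  · intro v hv
    rw [neg_mul_neg, ← C_mul, hinv v, A_symm v (σ v) s, A_sq (hadj v hv) s, C_1]
  · intro v hv _
    exact Equiv.Perm.mem_support.mp hv
  · intro v hv
    exact Equiv.Perm.apply_mem_support.mpr hv
  · intro v hv
    exact hinv v

lemma sum_support_not_invol {σ : Equiv.Perm V}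
    (hadj : ∀ v ∈ σ.support, G.Adj (σ v) v) (hni : ¬ Function.Involutive σ) :
    ∑ s : (G.edgeFinset → Bool), ∏ v ∈ σ.support, (-C (A G s (σ v) v)) = 0 := by
  obtain ⟨v0, h0⟩ := not_forall.mp hni
  have hv0 : v0 ∈ σ.support := by
    rw [Equiv.Perm.mem_support]
    intro h
    exact h0 (by rw [h, h])
  have he0 : s(σ v0, v0) ∈ G.edgeFinset := by
    rw [SimpleGraph.mem_edgeFinset, SimpleGraph.mem_edgeSet]
    exact hadj v0 hv0
  set e0 : G.edgeFinset := ⟨s(σ v0, v0), he0⟩ with he0def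
  refine Finset.sum_ninvolution (flip e0) ?_ ?_ (fun _ => Finset.mem_univ _) (flip_flip e0)
  · intro s
    have key : ∀ v ∈ σ.support.erase v0, s(σ v, v) ≠ (e0 : Sym2 V) := by
      intro v hv hc
      rcases Sym2.eq_iff.mp hc with ⟨h1, h2⟩ | ⟨h1, h2⟩
      · exact (Finset.mem_erase.mp hv).1 h2
      · exact h0 (by rw [← h2, h1])
    rw [← Finset.mul_prod_erase _ _ hv0, ← Finset.mul_prod_erase _ _ hv0]
    have h1 : ∏ v ∈ σ.support.erase v0, (-C (A G (flip e0 s) (σ v) v))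
        = ∏ v ∈ σ.support.erase v0, (-C (A G s (σ v) v)) :=
      Finset.prod_congr rfl fun v hv => by rw [A_flip_ne e0 s (key v hv)]
    rw [h1, A_flip_eq e0 s rfl, map_neg, neg_neg]
    ring
  · intro s _
    exact flip_ne_self e0 s

lemma sign_invol (σ : Equiv.Perm V) (h : Function.Involutive σ) (k : ℕ)
    (hk : σ.support.card = 2 * k) : Equiv.Perm.sign σ = (-1 : ℤˣ) ^ k := by
  have horder : σ ^ 2 = 1 := by
    ext v
    simp [pow_two, Equiv.Perm.mul_apply, h v]
  have h2 : ∀ a ∈ σ.cycleType, a = 2 := by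
    intro a ha
    have hdvd : a ∣ 2 := dvd_trans (Multiset.dvd_lcm ha)
      (by rw [Equiv.Perm.lcm_cycleType]; exact orderOf_dvd_of_pow_eq_one horder)
    have hle := Nat.le_of_dvd (by norm_num) hdvd
    have := Equiv.Perm.two_le_of_mem_cycleType ha
    omega
  have hrep : σ.cycleType = Multiset.replicate (Multiset.card σ.cycleType) 2 :=
    Multiset.eq_replicate_card.mpr h2
  have hsum : σ.cycleType.sum = 2 * Multiset.card σ.cycleType := by
    conv_lhs => rw [hrep]
    rw [Multiset.sum_replicate, smul_eq_mul]
    ring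
  have hcard : Multiset.card σ.cycleType = k := by
    have := Equiv.Perm.sum_cycleType σ
    omega
  rw [Equiv.Perm.sign_of_cycleType, hsum, hcard, pow_add, pow_mul]
  norm_num

lemma IsM.eq_of_mem {M : Finset (Sym2 V)} (hM : IsM G M) {e f : Sym2 V} (he : e ∈ M)
    (hf : f ∈ M) {v : V} (hv : v ∈ e) (hv' : v ∈ f) : e = f := by
  by_contra hne
  exact hM.2 e he f hf hne v ⟨hv, hv'⟩

noncomputable def mFun (M : Finset (Sym2 V)) (v : V) : V :=
  if h : ∃ e ∈ M, v ∈ e then Sym2.Mem.other' h.choose_spec.2 else v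

lemma mFun_eq_self {M : Finset (Sym2 V)} {v : V} (h : ¬ ∃ e ∈ M, v ∈ e) :
    mFun M v = v := dif_neg h

lemma mFun_mem {M : Finset (Sym2 V)} (hM : IsM G M) {v : V} (h : ∃ e ∈ M, v ∈ e) :
    s(v, mFun M v) ∈ M ∧ mFun M v ≠ v := by
  rw [mFun, dif_pos h]
  have hspec := h.choose_spec
  have h1 : s(v, Sym2.Mem.other' hspec.2) = h.choose := Sym2.other_spec' hspec.2
  constructor
  · rw [h1]; exact hspec.1
  · have hd : ¬ (h.choose).IsDiag :=
      G.not_isDiag_of_mem_edgeSet (by simpa [SimpleGraph.mem_edgeFinset] using hM.1 hspec.1)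
    have := Sym2.other_ne hd hspec.2
    rwa [Sym2.other_eq_other'] at this

lemma mFun_edge_unique {M : Finset (Sym2 V)} (hM : IsM G M) {e : Sym2 V} {v : V}
    (he : e ∈ M) (hv : v ∈ e) : e = s(v, mFun M v) := by
  have h : ∃ e ∈ M, v ∈ e := ⟨e, he, hv⟩
  exact hM.eq_of_mem he (mFun_mem hM h).1 hv (Sym2.mem_mk_left _ _)

lemma mFun_invol {M : Finset (Sym2 V)} (hM : IsM G M) : Function.Involutive (mFun M) := by
  intro v
  by_cases h : ∃ e ∈ M, v ∈ e
  · obtain ⟨hmem, hne⟩ := mFun_mem hM h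
    have h2 := mFun_edge_unique hM hmem (Sym2.mem_mk_right v (mFun M v))
    rw [Sym2.eq_swap] at h2
    exact (Sym2.congr_right.mp h2).symm
  · rw [mFun_eq_self h, mFun_eq_self h]

noncomputable def mPerm {M : Finset (Sym2 V)} (hM : IsM G M) : Equiv.Perm V :=
  (mFun_invol hM).toPerm

lemma mPerm_apply {M : Finset (Sym2 V)} (hM : IsM G M) (v : V) : mPerm hM v = mFun M v := rfl

lemma mem_mPerm_support {M : Finset (Sym2 V)} (hM : IsM G M) {v : V} :
    v ∈ (mPerm hM).support ↔ ∃ e ∈ M, v ∈ e := by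
  rw [Equiv.Perm.mem_support, mPerm_apply]
  constructor
  · intro hne
    by_contra h
    exact hne (mFun_eq_self h)
  · intro h
    exact (mFun_mem hM h).2

noncomputable def mEdges (σ : Equiv.Perm V) : Finset (Sym2 V) :=
  σ.support.image (fun v => s(v, σ v))

lemma mem_mEdges_eq {σ : Equiv.Perm V} (hinv : Function.Involutive σ) {u v : V}
    (hu : u ∈ s(v, σ v)) : s(v, σ v) = s(u, σ u) := by
  rcases Sym2.mem_iff.mp hu with h | h
  · rw [h]
  · subst h
    rw [hinv v, Sym2.eq_swap]

lemma mEdges_isM {σ : Equiv.Perm V} (hadj : ∀ v ∈ σ.support, G.Adj (σ v) v)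
    (hinv : Function.Involutive σ) : IsM G (mEdges σ) := by
  constructor
  · intro e he
    obtain ⟨v, hv, rfl⟩ := Finset.mem_image.mp he
    simp only [SimpleGraph.mem_edgeFinset, SimpleGraph.mem_edgeSet]
    exact (hadj v hv).symm
  · rintro a ha b hb hne u ⟨hua, hub⟩
    obtain ⟨v, hv, rfl⟩ := Finset.mem_image.mp ha
    obtain ⟨w, hw, rfl⟩ := Finset.mem_image.mp hb
    exact hne ((mem_mEdges_eq hinv hua).trans (mem_mEdges_eq hinv hub).symm)

lemma mEdges_card {σ : Equiv.Perm V} (hinv : Function.Involutive σ) :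
    σ.support.card = 2 * (mEdges σ).card := by
  rw [Finset.card_eq_sum_card_fiberwise (f := fun v => s(v, σ v)) (t := mEdges σ)
    (fun v hv => Finset.mem_image_of_mem _ hv)]
  have hfib : ∀ e ∈ mEdges σ,
      (σ.support.filter (fun v => s(v, σ v) = e)).card = 2 := by
    intro e he
    obtain ⟨v0, hv0, rfl⟩ := Finset.mem_image.mp he
    have hne : v0 ≠ σ v0 := (Equiv.Perm.mem_support.mp hv0).symm
    have : σ.support.filter (fun v => s(v, σ v) = s(v0, σ v0)) = {v0, σ v0} := by
      apply Finset.ext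
      intro v
      simp only [Finset.mem_filter, Finset.mem_insert, Finset.mem_singleton]
      constructor
      · rintro ⟨hv, heq⟩
        rcases Sym2.eq_iff.mp heq with ⟨h1, _⟩ | ⟨h1, _⟩
        · exact Or.inl h1
        · exact Or.inr h1
      · rintro (rfl | rfl)
        · exact ⟨hv0, rfl⟩
        · refine ⟨Equiv.Perm.apply_mem_support.mpr hv0, ?_⟩
          rw [hinv v0, Sym2.eq_swap]
    rw [this, Finset.card_pair hne]
  rw [Finset.sum_congr rfl hfib, Finset.sum_const, smul_eq_mul, mul_comm]

lemma mPerm_mEdges {σ : Equiv.Perm V} (hadj : ∀ v ∈ σ.support, G.Adj (σ v) v)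
    (hinv : Function.Involutive σ) (hM : IsM G (mEdges σ)) : mPerm hM = σ := by
  apply Equiv.ext
  intro v
  rw [mPerm_apply]
  by_cases hv : v ∈ σ.support
  · have := mFun_edge_unique hM (Finset.mem_image_of_mem (fun v => s(v, σ v)) hv)
      (Sym2.mem_mk_left v (σ v))
    exact (Sym2.congr_right.mp this).symm
  · have hfix : σ v = v := Equiv.Perm.notMem_support.mp hv
    rw [hfix]
    apply mFun_eq_self
    rintro ⟨e, he, hve⟩
    obtain ⟨w, hw, rfl⟩ := Finset.mem_image.mp he
    rcases Sym2.mem_iff.mp hve with rfl | rfl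
    · exact hv hw
    · exact hv (Equiv.Perm.apply_mem_support.mpr hw)

lemma mEdges_mPerm {M : Finset (Sym2 V)} (hM : IsM G M) : mEdges (mPerm hM) = M := by
  apply Finset.ext
  intro e
  constructor
  · intro he
    obtain ⟨v, hv, rfl⟩ := Finset.mem_image.mp he
    exact (mFun_mem hM ((mem_mPerm_support hM).mp hv)).1
  · intro he
    have hv : e.out.1 ∈ e := Sym2.out_fst_mem e
    have h : ∃ f ∈ M, e.out.1 ∈ f := ⟨e, he, hv⟩
    have hsupp : e.out.1 ∈ (mPerm hM).support := (mem_mPerm_support hM).mpr h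
    rw [mEdges, Finset.mem_image]
    exact ⟨e.out.1, hsupp, (mFun_edge_unique hM he hv).symm⟩

lemma IsM.card_le {M : Finset (Sym2 V)} (hM : IsM G M) : M.card ≤ Fintype.card V := by
  rw [← Finset.card_univ]
  apply Finset.card_le_card_of_injOn (fun e => e.out.1) (fun e _ => Finset.mem_univ _)
  intro e1 h1 e2 h2 heq
  by_contra hne
  exact hM.2 e1 h1 e2 h2 hne e1.out.1
    ⟨Sym2.out_fst_mem e1, by simp only at heq; exact heq ▸ Sym2.out_fst_mem e2⟩

noncomputable def mPermOf (G : SimpleGraph V) [DecidableRel G.Adj]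
    (M : Finset (Sym2 V)) : Equiv.Perm V :=
  if h : IsM G M then mPerm h else 1

lemma units_neg_one_pow_smul (k : ℕ) (x : ℝ[X]) :
    ((-1 : ℤˣ) ^ k) • x = C ((-1 : ℝ) ^ k) * x := by
  rw [Units.smul_def]
  have h1 : (((-1 : ℤˣ) ^ k : ℤˣ) : ℤ) = (-1 : ℤ) ^ k := by push_cast; ring
  rw [h1, zsmul_eq_mul]
  have h2 : (((-1 : ℤ) ^ k : ℤ) : ℝ[X]) = C ((-1 : ℝ) ^ k) := by push_cast; simp
  rw [h2]

end GGaux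

open GGaux

open scoped Classical in
/-- Godsil–Gutman: For a simple graph `G` on `n` vertices with `m` edges,
the average over all `2^m` signings `s` of the characteristic polynomial of the signed
adjacency matrix `A_s` equals the matching polynomial
`μ_G(x) = Σ_i (-1)^i m_i x^{n-2i}`. -/
theorem godsil_gutman
    {V : Type*} [Fintype V] [DecidableEq V]
    (G : SimpleGraph V) [DecidableRel G.Adj]
    (n m : ℕ) (hn : Fintype.card V = n) (hm : G.edgeFinset.card = m)
    (matchCount : ℕ → ℕ)
    (hmatch : ∀ i, matchCount i = (G.edgeFinset.powerset.filter
      (fun M => M.card = i ∧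
        ∀ a ∈ M, ∀ b ∈ M, a ≠ b → ∀ v : V, ¬(v ∈ a ∧ v ∈ b))).card)
    (Asgn : (G.edgeFinset → Bool) → Matrix V V ℝ)
    (hAsgn : ∀ s u v, Asgn s u v =
      if h : s(u, v) ∈ G.edgeFinset then (if s ⟨s(u, v), h⟩ then 1 else -1) else 0) :
    ((2 : ℝ) ^ m)⁻¹ • (∑ s : (G.edgeFinset → Bool), (Asgn s).charpoly)
      = ∑ i ∈ Finset.range (n + 1),
          C ((-1) ^ i * (matchCount i : ℝ)) * X ^ (n - 2 * i) := by
  subst hn hm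
  have hA : ∀ s, Asgn s = A G s := by
    intro s; ext u v; rw [hAsgn]; rfl
  set nn := Fintype.card V with hnn
  set mm := G.edgeFinset.card with hmm
  have hcardfun : Fintype.card (G.edgeFinset → Bool) = 2 ^ mm := by
    rw [Fintype.card_fun, Fintype.card_bool, Fintype.card_coe]
  -- the set of good permutations
  set S : Finset (Equiv.Perm V) := Finset.univ.filter
    (fun σ => (∀ v ∈ σ.support, G.Adj (σ v) v) ∧ Function.Involutive σ) with hS
  -- weight function
  set w : ℕ → ℝ[X] := fun i => C ((-1 : ℝ) ^ i) * X ^ (nn - 2 * i) with hw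
  -- Step 1: expand charpoly and swap sums
  have step1 : ∑ s : (G.edgeFinset → Bool), (Asgn s).charpoly
      = ∑ σ : Equiv.Perm V, Equiv.Perm.sign σ •
          ((∑ s : (G.edgeFinset → Bool), ∏ v ∈ σ.support, (-C (A G s (σ v) v)))
            * X ^ (nn - σ.support.card)) := by
    have h1 : ∀ s : (G.edgeFinset → Bool), (Asgn s).charpoly
        = ∑ σ : Equiv.Perm V, Equiv.Perm.sign σ •
            ((∏ v ∈ σ.support, (-C (A G s (σ v) v))) * X ^ (nn - σ.support.card)) := by
      intro s
      rw [hA s, Matrix.charpoly, Matrix.det_apply]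
      exact Finset.sum_congr rfl fun σ _ => by rw [prod_charmatrix]
    rw [Finset.sum_congr rfl fun s _ => h1 s, Finset.sum_comm]
    refine Finset.sum_congr rfl fun σ _ => ?_
    rw [← Finset.smul_sum, ← Finset.sum_mul]
  rw [step1]
  -- Step 2: restrict the sum to S
  have step2 : ∑ σ : Equiv.Perm V, Equiv.Perm.sign σ •
          ((∑ s : (G.edgeFinset → Bool), ∏ v ∈ σ.support, (-C (A G s (σ v) v)))
            * X ^ (nn - σ.support.card))
      = ∑ σ ∈ S, (2 ^ mm : ℕ) • w ((mEdges σ).card) := by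
    rw [← Finset.sum_subset (Finset.subset_univ S)]
    · refine Finset.sum_congr rfl fun σ hσ => ?_
      obtain ⟨hadj, hinv⟩ := (Finset.mem_filter.mp hσ).2
      have hsum1 : ∑ s : (G.edgeFinset → Bool), ∏ v ∈ σ.support, (-C (A G s (σ v) v))
          = (2 ^ mm : ℕ) • (1 : ℝ[X]) := by
        rw [Finset.sum_congr rfl fun s _ => prod_support_invol hadj hinv s,
          Finset.sum_const, Finset.card_univ, hcardfun]
      rw [hsum1, sign_invol σ hinv _ (mEdges_card hinv), smul_mul_assoc, one_mul,
        units_neg_one_pow_smul, mEdges_card hinv]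
      simp only [hw, nsmul_eq_mul, Nat.cast_pow, Nat.cast_ofNat]
      ring
    · intro σ _ hσ
      rw [hS, Finset.mem_filter] at hσ
      push_neg at hσ
      by_cases hadj : ∀ v ∈ σ.support, G.Adj (σ v) v
      · rw [sum_support_not_invol hadj (hσ (Finset.mem_univ σ) hadj), zero_mul, smul_zero]
      · push_neg at hadj
        obtain ⟨v, hv, hnadj⟩ := hadj
        have : ∀ s : (G.edgeFinset → Bool),
            ∏ v ∈ σ.support, (-C (A G s (σ v) v)) = 0 := by
          intro s
          refine Finset.prod_eq_zero hv ?_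
          rw [A_not_adj hnadj, map_zero, neg_zero]
        rw [Finset.sum_congr rfl fun s _ => this s, Finset.sum_const, smul_zero,
          zero_mul, smul_zero]
  rw [step2, ← Finset.smul_sum, ← Nat.cast_smul_eq_nsmul ℝ, smul_smul]
  have hcast : ((2 ^ mm : ℕ) : ℝ) = (2 : ℝ) ^ mm := by push_cast; ring
  rw [hcast, inv_mul_cancel₀ (by positivity), one_smul]
  -- Step 3: bijection with matchings
  set MS : Finset (Finset (Sym2 V)) := G.edgeFinset.powerset.filter
    (fun M => ∀ a ∈ M, ∀ b ∈ M, a ≠ b → ∀ v : V, ¬(v ∈ a ∧ v ∈ b)) with hMS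
  have hMSmem : ∀ M, M ∈ MS ↔ IsM G M := by
    intro M
    rw [hMS, Finset.mem_filter, Finset.mem_powerset, IsM]
    constructor
    · rintro ⟨h1, h2⟩
      exact ⟨fun e he => by simpa [SimpleGraph.mem_edgeFinset] using h1 he, h2⟩
    · rintro ⟨h1, h2⟩
      exact ⟨fun e he => by simpa [SimpleGraph.mem_edgeFinset] using h1 he, h2⟩
  have step3 : ∑ σ ∈ S, w ((mEdges σ).card) = ∑ M ∈ MS, w M.card := by
    refine Finset.sum_nbij' mEdges (mPermOf G) ?_ ?_ ?_ ?_ ?_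
    · intro σ hσ
      obtain ⟨hadj, hinv⟩ := (Finset.mem_filter.mp hσ).2
      exact (hMSmem _).mpr (mEdges_isM hadj hinv)
    · intro M hM
      have h := (hMSmem M).mp hM
      rw [hS, Finset.mem_filter]
      refine ⟨Finset.mem_univ _, ?_, ?_⟩
      · intro v hv
        have hcov := (mem_mPerm_support h).mp (by rw [mPermOf, dif_pos h] at hv; exact hv)
        have := (mFun_mem h hcov).1
        have hadj : G.Adj v (mFun M v) := by
          simpa [SimpleGraph.mem_edgeFinset] using h.1 this
        rw [mPermOf, dif_pos h]
        exact hadj.symm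
      · rw [mPermOf, dif_pos h]
        exact mFun_invol h
    · intro σ hσ
      obtain ⟨hadj, hinv⟩ := (Finset.mem_filter.mp hσ).2
      rw [mPermOf, dif_pos (mEdges_isM hadj hinv)]
      exact mPerm_mEdges hadj hinv _
    · intro M hM
      have h := (hMSmem M).mp hM
      rw [mPermOf, dif_pos h]
      exact mEdges_mPerm h
    · intro σ hσ
      rfl
  rw [step3]
  -- Step 4: group by cardinality
  have hmaps : ∀ M ∈ MS, M.card ∈ Finset.range (nn + 1) := by
    intro M hM
    rw [Finset.mem_range, Nat.lt_succ_iff]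
    exact ((hMSmem M).mp hM).card_le
  rw [← Finset.sum_fiberwise_of_maps_to hmaps (fun M => w M.card)]
  refine Finset.sum_congr rfl fun i hi => ?_
  have hfilter : MS.filter (fun M => M.card = i)
      = G.edgeFinset.powerset.filter (fun M => M.card = i ∧
          ∀ a ∈ M, ∀ b ∈ M, a ≠ b → ∀ v : V, ¬(v ∈ a ∧ v ∈ b)) := by
    rw [hMS, Finset.filter_filter]
    exact Finset.filter_congr fun M _ => by tauto
  have hinner : ∑ M ∈ MS.filter (fun M => M.card = i), w M.card
      = (matchCount i : ℕ) • w i := by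
    rw [Finset.sum_congr rfl (fun M hM => by rw [(Finset.mem_filter.mp hM).2]),
      Finset.sum_const, hfilter, hmatch i]
  rw [hinner, hw]
  simp only [nsmul_eq_mul]
  rw [C_mul, Polynomial.C_eq_natCast]
  ring
end

section
/- Let f_1,…,f_k be monic (or positive-leading-coefficient) real-rooted polynomials of degree n having a common interlacing, and let f = f_1 + ⋯ + f_k. Then f is real-rooted, and for each ℓ ∈ {1,…,n} there exists an index i such that the ℓ-th largest root of f_i is at most the ℓ-th largest root of f, and there exists an index j such that the ℓ-th largest root of f_j is at least the ℓ-th largest root of f. -/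
open Polynomial

/-- A real polynomial is real-rooted if it has as many real roots
(with multiplicity) as its degree. -/
def RealRooted (f : Polynomial ℝ) : Prop := (f.roots.card : ℕ) = f.natDegree

/-- The `ℓ`-th largest real root of `f` (1-indexed). -/
noncomputable def nthLargestRoot (f : Polynomial ℝ) (ℓ : ℕ) : ℝ :=
  (f.roots.sort (· ≤ ·)).getD (Multiset.card f.roots - ℓ) 0

/-- `g` interlaces `f`: both are real-rooted, `deg g = deg f - 1`, and the ascending
roots satisfy `β₁ ≤ α₁ ≤ β₂ ≤ ⋯ ≤ α_{n-1} ≤ β_n`. -/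
def Interlaces (g f : Polynomial ℝ) : Prop :=
  RealRooted g ∧ RealRooted f ∧ g.natDegree + 1 = f.natDegree ∧
    ∀ i : ℕ, i < g.natDegree →
      (f.roots.sort (· ≤ ·)).getD i 0 ≤ (g.roots.sort (· ≤ ·)).getD i 0 ∧
      (g.roots.sort (· ≤ ·)).getD i 0 ≤ (f.roots.sort (· ≤ ·)).getD (i + 1) 0

namespace CI

lemma getD_mem {l : List ℝ} {j : ℕ} (hj : j < l.length) : l.getD j 0 ∈ l := by
  rw [List.getD_eq_getElem l 0 hj]; exact List.getElem_mem hj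

lemma list_le_iff (x : ℝ) : ∀ (l : List ℝ), l.Pairwise (· ≤ ·) → ∀ j, j < l.length →
    (l.getD j 0 ≤ x ↔ j < l.countP (fun y => decide (y ≤ x))) := by
  intro l
  induction l with
  | nil => intro _ j hj; simp at hj
  | cons a t ih =>
    intro hs j hj
    rw [List.pairwise_cons] at hs
    obtain ⟨ha, hts⟩ := hs
    have hta : ¬ a ≤ x → t.countP (fun y => decide (y ≤ x)) = 0 := by
      intro h
      rw [List.countP_eq_zero]
      intro y hy
      simp only [decide_eq_true_eq]
      exact fun hyx => h (le_trans (ha y hy) hyx)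
    match j with
    | 0 =>
      simp only [List.getD_cons_zero, List.countP_cons]
      by_cases h : a ≤ x
      · simp [h]
      · simp [hta h, h]
    | j + 1 =>
      simp only [List.getD_cons_succ, List.countP_cons]
      have hjt : j < t.length := by simpa using hj
      by_cases h : a ≤ x
      · rw [ih hts j hjt]; simp [h]
      · have h1 : ¬ t.getD j 0 ≤ x := fun hc => h (le_trans (ha _ (getD_mem hjt)) hc)
        simp [h1, hta h, h]
        rw [← List.getD_eq_getElem?_getD]
        exact lt_of_not_ge h1

lemma list_lt_iff (x : ℝ) : ∀ (l : List ℝ), l.Pairwise (· ≤ ·) → ∀ j, j < l.length →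
    (x ≤ l.getD j 0 ↔ l.countP (fun y => decide (y < x)) ≤ j) := by
  intro l
  induction l with
  | nil => intro _ j hj; simp at hj
  | cons a t ih =>
    intro hs j hj
    rw [List.pairwise_cons] at hs
    obtain ⟨ha, hts⟩ := hs
    have hta : ¬ a < x → t.countP (fun y => decide (y < x)) = 0 := by
      intro h
      rw [List.countP_eq_zero]
      intro y hy
      simp only [decide_eq_true_eq]
      exact fun hyx => h (lt_of_le_of_lt (ha y hy) hyx)
    match j with
    | 0 =>
      simp only [List.getD_cons_zero, List.countP_cons]
      by_cases h : a < x
      · simp [h, not_le.mpr h]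
      · simp [hta h, h, not_lt.mp h]
    | j + 1 =>
      simp only [List.getD_cons_succ, List.countP_cons]
      have hjt : j < t.length := by simpa using hj
      by_cases h : a < x
      · rw [ih hts j hjt]; simp [h]
      · have h1 : x ≤ t.getD j 0 := le_trans (not_lt.mp h) (ha _ (getD_mem hjt))
        simp [h1, hta h, h]
        rw [← List.getD_eq_getElem?_getD]
        exact h1


noncomputable def rho (s : Multiset ℝ) (j : ℕ) : ℝ := (s.sort (· ≤ ·)).getD j 0
noncomputable def cntLE (s : Multiset ℝ) (x : ℝ) : ℕ := Multiset.card (s.filter (· ≤ x))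
noncomputable def cntLT (s : Multiset ℝ) (x : ℝ) : ℕ := Multiset.card (s.filter (· < x))

lemma cntLE_sort (s : Multiset ℝ) (x : ℝ) :
    cntLE s x = (s.sort (· ≤ ·)).countP (fun y => decide (y ≤ x)) := by
  rw [cntLE, ← Multiset.countP_eq_card_filter]
  conv_lhs => rw [← Multiset.sort_eq s (· ≤ ·)]
  rw [Multiset.coe_countP]

lemma cntLT_sort (s : Multiset ℝ) (x : ℝ) :
    cntLT s x = (s.sort (· ≤ ·)).countP (fun y => decide (y < x)) := by
  rw [cntLT, ← Multiset.countP_eq_card_filter]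
  conv_lhs => rw [← Multiset.sort_eq s (· ≤ ·)]
  rw [Multiset.coe_countP]

lemma rho_le_iff {s : Multiset ℝ} {x : ℝ} {j : ℕ} (hj : j < Multiset.card s) :
    rho s j ≤ x ↔ j < cntLE s x := by
  rw [rho, cntLE_sort]
  exact list_le_iff x _ (Multiset.pairwise_sort s _) j (by rwa [Multiset.length_sort])

lemma le_rho_iff {s : Multiset ℝ} {x : ℝ} {j : ℕ} (hj : j < Multiset.card s) :
    x ≤ rho s j ↔ cntLT s x ≤ j := by
  rw [rho, cntLT_sort]
  exact list_lt_iff x _ (Multiset.pairwise_sort s _) j (by rwa [Multiset.length_sort])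

lemma rho_mono {s : Multiset ℝ} {j j' : ℕ} (h : j ≤ j') (hj' : j' < Multiset.card s) :
    rho s j ≤ rho s j' := by
  rw [rho_le_iff (lt_of_le_of_lt h hj')]
  exact lt_of_le_of_lt h ((rho_le_iff hj').mp le_rfl)

lemma rho_mem {s : Multiset ℝ} {j : ℕ} (hj : j < Multiset.card s) : rho s j ∈ s := by
  have := getD_mem (l := s.sort (· ≤ ·)) (j := j) (by rwa [Multiset.length_sort])
  rwa [Multiset.mem_sort] at this

lemma rho_zero_le {s : Multiset ℝ} {r : ℝ} (hr : r ∈ s) : rho s 0 ≤ r := by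
  by_contra h
  have hc : 0 < Multiset.card s := Multiset.card_pos.mpr (by rintro rfl; simp at hr)
  have h2 : cntLT s (rho s 0) ≤ 0 := (le_rho_iff hc).mp le_rfl
  have h3 : r ∈ s.filter (· < rho s 0) := Multiset.mem_filter.mpr ⟨hr, lt_of_not_ge h⟩
  have h4 : 0 < Multiset.card (s.filter (· < rho s 0)) :=
    Multiset.card_pos.mpr (fun he => by rw [he] at h3; simp at h3)
  rw [cntLT] at h2; omega

lemma cnt_split (s : Multiset ℝ) (x : ℝ) :
    cntLE s x + Multiset.card (s.filter (fun y => x < y)) = Multiset.card s := by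
  have h := Multiset.filter_add_not (fun y => y ≤ x) s
  have h2 : s.filter (fun y => ¬ y ≤ x) = s.filter (fun y => x < y) :=
    Multiset.filter_congr (fun y _ => by simp [not_le])
  calc cntLE s x + Multiset.card (s.filter (fun y => x < y))
      = Multiset.card (s.filter (fun y => y ≤ x) + s.filter (fun y => ¬ y ≤ x)) := by
        rw [Multiset.card_add, h2]; rfl
    _ = Multiset.card s := by rw [h]

lemma le_rho_last {s : Multiset ℝ} {r : ℝ} (hr : r ∈ s) :
    r ≤ rho s (Multiset.card s - 1) := by
  by_contra h
  have hc : 0 < Multiset.card s := Multiset.card_pos.mpr (by rintro rfl; simp at hr)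
  have h2 : Multiset.card s - 1 < cntLE s (rho s (Multiset.card s - 1)) :=
    (rho_le_iff (by omega)).mp le_rfl
  have h3 : r ∈ s.filter (fun y => rho s (Multiset.card s - 1) < y) :=
    Multiset.mem_filter.mpr ⟨hr, lt_of_not_ge h⟩
  have h4 : 0 < Multiset.card (s.filter (fun y => rho s (Multiset.card s - 1) < y)) :=
    Multiset.card_pos.mpr (fun he => by rw [he] at h3; simp at h3)
  have := cnt_split s (rho s (Multiset.card s - 1))
  omega

lemma cntLE_cons (v x : ℝ) (s : Multiset ℝ) :
    cntLE (v ::ₘ s) x = cntLE s x + if v ≤ x then 1 else 0 := by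
  rw [cntLE, cntLE, Multiset.filter_cons]
  split <;> simp [add_comm]

lemma cntLT_cons (v x : ℝ) (s : Multiset ℝ) :
    cntLT (v ::ₘ s) x = cntLT s x + if v < x then 1 else 0 := by
  rw [cntLT, cntLT, Multiset.filter_cons]
  split <;> simp [add_comm]

lemma cntLT_le_cntLE (s : Multiset ℝ) (x : ℝ) : cntLT s x ≤ cntLE s x :=
  Multiset.card_le_card (Multiset.monotone_filter_right s (fun _ => le_of_lt))

lemma cntLE_le_card (s : Multiset ℝ) (x : ℝ) : cntLE s x ≤ Multiset.card s :=
  Multiset.card_le_card (Multiset.filter_le _ s)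

lemma cntLT_le_card (s : Multiset ℝ) (x : ℝ) : cntLT s x ≤ Multiset.card s :=
  Multiset.card_le_card (Multiset.filter_le _ s)

lemma cntLT_mono (s : Multiset ℝ) {x y : ℝ} (h : x ≤ y) : cntLT s x ≤ cntLT s y :=
  Multiset.card_le_card (Multiset.monotone_filter_right s (fun _ hz => lt_of_lt_of_le hz h))

lemma cntLE_mono (s : Multiset ℝ) {x y : ℝ} (h : x ≤ y) : cntLE s x ≤ cntLE s y :=
  Multiset.card_le_card (Multiset.monotone_filter_right s (fun _ hz => le_trans hz h))

lemma cntLE_eq_cntLT_of_not_mem {s : Multiset ℝ} {x : ℝ} (h : x ∉ s) :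
    cntLE s x = cntLT s x := by
  rw [cntLE, cntLT]
  congr 1
  apply Multiset.filter_congr
  intro y hy
  constructor
  · intro hle; exact lt_of_le_of_ne hle (by rintro rfl; exact h hy)
  · exact le_of_lt

lemma neg_prod : ∀ (s : Multiset ℝ), (∀ y ∈ s, y < 0) → 0 < (-1 : ℝ)^(Multiset.card s) * s.prod := by
  intro s
  induction s using Multiset.induction_on with
  | empty => intro _; simp
  | cons a t ih =>
    intro h
    have ha : a < 0 := h a (Multiset.mem_cons_self a t)
    have ht := ih (fun y hy => h y (Multiset.mem_cons_of_mem hy))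
    have : (-1 : ℝ)^(Multiset.card (a ::ₘ t)) * (a ::ₘ t).prod
        = (-a) * ((-1)^(Multiset.card t) * t.prod) := by
      rw [Multiset.card_cons, Multiset.prod_cons]; ring
    rw [this]
    exact mul_pos (by linarith) ht

lemma eval_sign {p : Polynomial ℝ} (hm : p.Monic) (hr : Multiset.card p.roots = p.natDegree)
    (x : ℝ) (hx : x ∉ p.roots) :
    0 < (-1 : ℝ)^(Multiset.card (p.roots.filter (fun y => x < y))) * p.eval x := by
  have hprod := prod_multiset_X_sub_C_of_monic_of_roots_card_eq hm hr
  have heval : p.eval x = (p.roots.map (fun a => x - a)).prod := by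
    conv_lhs => rw [← hprod]
    rw [eval_multiset_prod, Multiset.map_map]
    congr 1
    apply Multiset.map_congr rfl
    intro a _
    simp
  have hsplit := Multiset.filter_add_not (fun y => x < y) p.roots
  set sgt := p.roots.filter (fun y => x < y) with hsgt
  set sle := p.roots.filter (fun y => ¬ x < y) with hsle
  have h1 : p.eval x = (sgt.map (fun a => x - a)).prod * (sle.map (fun a => x - a)).prod := by
    rw [heval]
    conv_lhs => rw [← hsplit]
    rw [Multiset.map_add, Multiset.prod_add]
  have hneg : 0 < (-1 : ℝ)^(Multiset.card sgt) * (sgt.map (fun a => x - a)).prod := by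
    have := neg_prod (sgt.map (fun a => x - a)) (by
      intro y hy
      obtain ⟨a, ha, rfl⟩ := Multiset.mem_map.mp hy
      have : x < a := (Multiset.mem_filter.mp ha).2
      linarith)
    rwa [Multiset.card_map] at this
  have hpos : 0 < (sle.map (fun a => x - a)).prod := by
    apply Multiset.prod_pos
    intro y hy
    obtain ⟨a, ha, rfl⟩ := Multiset.mem_map.mp hy
    obtain ⟨hmem, hnlt⟩ := Multiset.mem_filter.mp ha
    have : a ≠ x := fun he => hx (he ▸ hmem)
    have : a < x := lt_of_le_of_ne (not_lt.mp hnlt) this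
    linarith
  calc (0:ℝ) < ((-1 : ℝ)^(Multiset.card sgt) * (sgt.map (fun a => x - a)).prod)
      * (sle.map (fun a => x - a)).prod := mul_pos hneg hpos
    _ = (-1 : ℝ)^(Multiset.card sgt) * p.eval x := by rw [h1]; ring



lemma cntLE_lt_mono (s : Multiset ℝ) {x y : ℝ} (h : x < y) : cntLE s x ≤ cntLT s y :=
  Multiset.card_le_card (Multiset.monotone_filter_right s (fun _ hz => lt_of_le_of_lt hz h))

lemma sign_cases {p : Polynomial ℝ} {n c m : ℕ} (hm : p.Monic)
    (hd : p.natDegree = n) (hr : Multiset.card p.roots = n) (hcm : c + m = n) {x : ℝ}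
    (hLE : c ≤ cntLE p.roots x) (hLT : cntLT p.roots x ≤ c) :
    p.eval x = 0 ∨ 0 < (-1 : ℝ)^m * p.eval x := by
  by_cases hx : x ∈ p.roots
  · exact Or.inl (isRoot_of_mem_roots hx)
  · right
    have heq : cntLE p.roots x = c := le_antisymm
      (by rw [cntLE_eq_cntLT_of_not_mem hx]; exact hLT) hLE
    have hsplit := cnt_split p.roots x
    have hcard : Multiset.card (p.roots.filter (fun y => x < y)) = m := by omega
    have := eval_sign hm (hd ▸ hr) x hx
    rwa [hcard] at this

lemma sum_sign {k : ℕ} (f : Fin k → Polynomial ℝ) (x : ℝ) (m : ℕ)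
    (h : ∀ i, (f i).eval x = 0 ∨ 0 < (-1 : ℝ)^m * (f i).eval x) :
    ((∑ i, f i).eval x = 0 → ∀ i, (f i).eval x = 0) ∧
    ((∃ i, (f i).eval x ≠ 0) → 0 < (-1 : ℝ)^m * (∑ i, f i).eval x) := by
  have hnn : ∀ i ∈ Finset.univ, (0:ℝ) ≤ (-1 : ℝ)^m * (f i).eval x := by
    intro i _
    rcases h i with h0 | hp
    · rw [h0]; simp
    · exact le_of_lt hp
  have hev : (-1 : ℝ)^m * (∑ i, f i).eval x = ∑ i, (-1 : ℝ)^m * (f i).eval x := by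
    rw [eval_finset_sum, Finset.mul_sum]
  constructor
  · intro h0 i
    have : ∑ j, (-1 : ℝ)^m * (f j).eval x = 0 := by rw [← hev, h0, mul_zero]
    have := (Finset.sum_eq_zero_iff_of_nonneg hnn).mp this i (Finset.mem_univ i)
    have hm0 : ((-1 : ℝ)^m) ≠ 0 := pow_ne_zero _ (by norm_num)
    exact (mul_eq_zero.mp this).resolve_left hm0
  · rintro ⟨i, hi⟩
    rw [hev]
    apply Finset.sum_pos' hnn
    refine ⟨i, Finset.mem_univ i, ?_⟩
    rcases h i with h0 | hp
    · exact absurd h0 hi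
    · exact hp

lemma ivt_poly {p : Polynomial ℝ} {a b : ℝ} (hab : a ≤ b)
    (hsign : p.eval a * p.eval b < 0) : ∃ r, r ∈ Set.Ioo a b ∧ p.eval r = 0 := by
  have hc : ContinuousOn (fun x => p.eval x) (Set.Icc a b) :=
    (Polynomial.continuous p).continuousOn
  rcases lt_or_ge (p.eval a) 0 with hneg | hpos
  · have hb : 0 < p.eval b := by nlinarith
    have : (0:ℝ) ∈ Set.Ioo (p.eval a) (p.eval b) := ⟨hneg, hb⟩
    obtain ⟨r, hr, hr0⟩ := intermediate_value_Ioo hab hc this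
    exact ⟨r, hr, hr0⟩
  · have ha : 0 < p.eval a := by
      rcases lt_or_eq_of_le hpos with h | h
      · exact h
      · exfalso; rw [← h] at hsign; simp at hsign
    have hb : p.eval b < 0 := by nlinarith
    have : (0:ℝ) ∈ Set.Ioo (p.eval b) (p.eval a) := ⟨hb, ha⟩
    obtain ⟨r, hr, hr0⟩ := intermediate_value_Ioo' hab hc this
    exact ⟨r, hr, hr0⟩

lemma sum_deg {k n : ℕ} (hk : 0 < k) (f : Fin k → Polynomial ℝ)
    (hm : ∀ i, (f i).Monic) (hd : ∀ i, (f i).natDegree = n) :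
    (∑ i, f i).natDegree = n ∧ (∑ i, f i) ≠ 0 := by
  have hco : (∑ i, f i).coeff n = (k : ℝ) := by
    rw [finset_sum_coeff]
    have : ∀ i ∈ Finset.univ, (f i).coeff n = 1 := by
      intro i _
      rw [← hd i]
      exact (hm i).coeff_natDegree
    rw [Finset.sum_congr rfl this]
    simp
  have hk' : ((k : ℝ)) ≠ 0 := Nat.cast_ne_zero.mpr (Nat.pos_iff_ne_zero.mp hk)
  have hne : (∑ i, f i) ≠ 0 := by
    intro h0
    rw [h0] at hco
    simp at hco
    exact hk' hco.symm
  constructor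
  · refine le_antisymm ?_ ?_
    · apply Polynomial.natDegree_sum_le_of_forall_le
      intro i _
      exact le_of_eq (hd i)
    · exact le_natDegree_of_ne_zero (by rw [hco]; exact hk')
  · exact hne

lemma case2 {k n : ℕ} (hk : 0 < k) (f : Fin k → Polynomial ℝ)
    (hm : ∀ i, (f i).Monic) (hd : ∀ i, (f i).natDegree = n+1)
    (hr : ∀ i, Multiset.card (f i).roots = n+1) (α : ℕ → ℝ)
    (hmono : ∀ j j', j ≤ j' → j' < n → α j ≤ α j')
    (hint : ∀ i j, j < n → rho (f i).roots j ≤ α j ∧ α j ≤ rho (f i).roots (j+1))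
    (hnc : ∀ v, ∃ i, (f i).eval v ≠ 0) :
    Multiset.card (∑ i, f i).roots = n + 1 ∧
    ∀ j, j < n + 1 →
      (∃ i, rho (f i).roots j ≤ rho (∑ i, f i).roots j) ∧
      (∃ i, rho (∑ i, f i).roots j ≤ rho (f i).roots j) := by
  obtain ⟨hdF, hFne⟩ := sum_deg hk f hm hd
  set F := ∑ i, f i with hF
  have i0 : Fin k := ⟨0, hk⟩
  have huniv : (Finset.univ : Finset (Fin k)).Nonempty := ⟨i0, Finset.mem_univ i0⟩
  -- strict chain
  have hstrict : ∀ j j', j < j' → j' < n → α j < α j' := by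
    intro j j' hjj hj'
    rcases lt_or_eq_of_le (hmono j j' (le_of_lt hjj) hj') with h | h
    · exact h
    · exfalso
      have hroot : ∀ i, (f i).eval (α j) = 0 := by
        intro i
        have h1 : α j ≤ rho (f i).roots (j+1) := (hint i j (lt_trans hjj hj')).2
        have h2 : rho (f i).roots (j+1) ≤ α (j+1) := (hint i (j+1) (by omega)).1
        have h3 : α (j+1) ≤ α j' := by
          rcases eq_or_lt_of_le (Nat.succ_le_of_lt hjj) with he | hl
          · exact le_of_eq (by rw [← he])
          · exact hmono (j+1) j' (le_of_lt hl) hj'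
        have heq : rho (f i).roots (j+1) = α j := le_antisymm (h ▸ (le_trans h2 h3)) h1
        have hmem : rho (f i).roots (j+1) ∈ (f i).roots := rho_mem (by rw [hr i]; omega)
        rw [heq] at hmem
        exact isRoot_of_mem_roots hmem
      obtain ⟨i, hi⟩ := hnc (α j)
      exact hi (hroot i)
  -- xlo and xhi
  set xlo : ℝ := (Finset.univ.inf' huniv (fun i => rho (f i).roots 0)) - 1 with hxlodef
  set xhi : ℝ := (Finset.univ.sup' huniv (fun i => rho (f i).roots n)) + 1 with hxhidef
  have hxlo : ∀ i, ∀ r ∈ (f i).roots, xlo < r := by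
    intro i r hrm
    have h1 : Finset.univ.inf' huniv (fun i => rho (f i).roots 0) ≤ rho (f i).roots 0 :=
      Finset.inf'_le _ (Finset.mem_univ i)
    have h2 : rho (f i).roots 0 ≤ r := rho_zero_le hrm
    rw [hxlodef]; linarith
  have hxhi : ∀ i, ∀ r ∈ (f i).roots, r < xhi := by
    intro i r hrm
    have h1 : rho (f i).roots n ≤ Finset.univ.sup' huniv (fun i => rho (f i).roots n) :=
      Finset.le_sup' (fun i => rho (f i).roots n) (Finset.mem_univ i)
    have h2 : r ≤ rho (f i).roots n := by
      have := le_rho_last hrm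
      rwa [hr i, Nat.add_sub_cancel] at this
    rw [hxhidef]; linarith
  -- chain
  set c : ℕ → ℝ := fun t => if t = 0 then xlo else if t ≤ n then α (t-1) else xhi with hcdef
  have hc0 : c 0 = xlo := by simp [hcdef]
  have hcmid : ∀ t, 1 ≤ t → t ≤ n → c t = α (t-1) := by
    intro t h1 h2
    simp only [hcdef]
    rw [if_neg (by omega), if_pos h2]
  have hctop : c (n+1) = xhi := by simp [hcdef]
  have hc : ∀ t, t ≤ n → c t < c (t+1) := by
    intro t ht
    have hmem0 : rho (f i0).roots 0 ∈ (f i0).roots := rho_mem (by rw [hr i0]; omega)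
    have hmemn : rho (f i0).roots n ∈ (f i0).roots := rho_mem (by rw [hr i0]; omega)
    rcases Nat.eq_zero_or_pos t with rfl | htpos
    · rcases Nat.eq_zero_or_pos n with hn0 | hnpos
      · have h1 : xlo < rho (f i0).roots 0 := hxlo i0 _ hmem0
        have h2 : rho (f i0).roots n < xhi := hxhi i0 _ hmemn
        have hc1 : c 1 = xhi := by
          simp only [hcdef]
          rw [if_neg (by omega), if_neg (by omega)]
        rw [hc0, hc1]
        have h3 : rho (f i0).roots 0 ≤ rho (f i0).roots n := rho_mono (by omega) (by rw [hr i0]; omega)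
        linarith
      · have h1 : xlo < rho (f i0).roots 0 := hxlo i0 _ hmem0
        have h2 : rho (f i0).roots 0 ≤ α 0 := (hint i0 0 hnpos).1
        rw [hc0, hcmid 1 le_rfl hnpos]
        simp only [Nat.sub_self]
        linarith
    · rcases Nat.lt_or_ge t n with hmid | htop
      · have hs := hstrict (t-1) t (by omega) hmid
        rw [hcmid t htpos (by omega), hcmid (t+1) (by omega) (by omega)]
        simpa using hs
      · have ht' : t = n := by omega
        subst ht'
        have h1 : α (t-1) ≤ rho (f i0).roots t := by
          have h := (hint i0 (t-1) (by omega)).2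
          rwa [show t-1+1 = t by omega] at h
        have h2 : rho (f i0).roots t < xhi := hxhi i0 _ hmemn
        have hctop' : c (t+1) = xhi := by
          simp only [hcdef]
          rw [if_neg (by omega), if_neg (by omega)]
        rw [hcmid t htpos le_rfl, hctop']
        linarith
  have hclt : ∀ t' t, t < t' → t' ≤ n+1 → c t < c t' := by
    intro t'
    induction t' with
    | zero => omega
    | succ m ih =>
      intro t ht hm'
      rcases Nat.lt_or_ge t m with h | h
      · exact lt_trans (ih t h (by omega)) (hc m (by omega))
      · have : t = m := by omega
        rw [this]; exact hc m (by omega)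
  -- signs of each f i along the chain
  have hsig : ∀ t, t ≤ n+1 → ∀ i, (f i).eval (c t) = 0 ∨
      0 < (-1 : ℝ)^(n+1-t) * (f i).eval (c t) := by
    intro t ht i
    rcases Nat.eq_zero_or_pos t with rfl | htpos
    · have hLT : cntLT (f i).roots xlo = 0 := by
        rw [cntLT, Multiset.card_eq_zero, Multiset.filter_eq_nil]
        intro a ha
        exact not_lt.mpr (le_of_lt (hxlo i a ha))
      rw [Nat.sub_zero, hc0]
      exact sign_cases (hm i) (hd i) (hr i) (show 0 + (n+1) = n+1 by omega)
        (Nat.zero_le _) (le_of_eq hLT)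
    · rcases Nat.lt_or_ge t (n+1) with hmid | htop
      · have hct : c t = α (t-1) := hcmid t htpos (by omega)
        have h1 : rho (f i).roots (t-1) ≤ α (t-1) := (hint i (t-1) (by omega)).1
        have hLE : t ≤ cntLE (f i).roots (α (t-1)) := by
          have := (rho_le_iff (by rw [hr i]; omega)).mp h1
          omega
        have h2 : α (t-1) ≤ rho (f i).roots t := by
          have h := (hint i (t-1) (by omega)).2
          rwa [show t-1+1 = t by omega] at h
        have hLT : cntLT (f i).roots (α (t-1)) ≤ t := by
          have := (le_rho_iff (by rw [hr i]; omega)).mp h2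
          omega
        rw [hct]
        exact sign_cases (hm i) (hd i) (hr i) (by omega : t + (n+1-t) = n+1) hLE hLT
      · have ht' : t = n+1 := by omega
        subst ht'
        rw [hctop, show n+1-(n+1) = 0 by omega]
        have hLE : n+1 ≤ cntLE (f i).roots xhi := by
          have hfs : (f i).roots.filter (· ≤ xhi) = (f i).roots := by
            apply Multiset.filter_eq_self.mpr
            intro a ha
            exact le_of_lt (hxhi i a ha)
          rw [cntLE, hfs, hr i]
        have hLT : cntLT (f i).roots xhi ≤ n+1 := by
          have := cntLT_le_card (f i).roots xhi
          rw [hr i] at this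
          exact this
        exact sign_cases (hm i) (hd i) (hr i) (by omega : (n+1) + 0 = n+1) hLE hLT
  have hFsig : ∀ t, t ≤ n+1 → 0 < (-1 : ℝ)^(n+1-t) * F.eval (c t) := by
    intro t ht
    exact (sum_sign f (c t) (n+1-t) (hsig t ht)).2 (hnc (c t))
  -- roots via IVT
  have hivt : ∀ t, t ≤ n → ∃ r, r ∈ Set.Ioo (c t) (c (t+1)) ∧ F.eval r = 0 := by
    intro t ht
    apply ivt_poly (le_of_lt (hc t ht))
    have hA := hFsig t (by omega)
    have hB := hFsig (t+1) (by omega)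
    have hnt : n + 1 - (t+1) = n - t := by omega
    rw [hnt] at hB
    have hprod : (0:ℝ) < ((-1)^(n+1-t) * F.eval (c t)) * ((-1)^(n-t) * F.eval (c (t+1))) :=
      mul_pos hA hB
    have hpow : ((-1:ℝ)^(n+1-t)) * ((-1)^(n-t)) = -1 := by
      rw [← pow_add]
      have : n+1-t + (n-t) = 2*(n-t)+1 := by omega
      rw [this]
      exact Odd.neg_one_pow ⟨n-t, by ring⟩
    nlinarith [hprod, hpow]
  choose! r hrIoo hr0 using hivt
  -- r t ∈ roots F
  have hrmem : ∀ t, t ≤ n → r t ∈ F.roots := by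
    intro t ht
    rw [Polynomial.mem_roots hFne]
    exact hr0 t ht
  have hrlt : ∀ t t', t < t' → t' ≤ n → r t < r t' := by
    intro t t' h1 h2
    have ha : r t < c (t+1) := (hrIoo t (by omega)).2
    have hb : c t' < r t' := (hrIoo t' h2).1
    have hcc : c (t+1) ≤ c t' := by
      rcases eq_or_lt_of_le (Nat.succ_le_of_lt h1) with he | hl
      · exact le_of_eq (by rw [← he])
      · exact le_of_lt (hclt t' (t+1) hl (by omega))
    linarith
  -- the root list
  set L : List ℝ := List.ofFn (fun t : Fin (n+1) => r t) with hLdef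
  have hLlen : L.length = n + 1 := by simp [hLdef]
  have hLsorted : L.Pairwise (· ≤ ·) := by
    rw [hLdef, List.pairwise_ofFn]
    intro a b hab
    exact le_of_lt (hrlt a b hab (by omega))
  have hLnodup : L.Nodup := by
    rw [hLdef, List.nodup_ofFn]
    intro a b hab
    by_contra hne
    rcases Nat.lt_or_ge (a : ℕ) (b : ℕ) with h | h
    · exact absurd hab (ne_of_lt (hrlt a b h (by omega)))
    · have h' : (b : ℕ) < (a : ℕ) := by
        rcases Nat.lt_or_ge (b : ℕ) (a : ℕ) with h2 | h2
        · exact h2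
        · exfalso; exact hne (Fin.ext (by omega))
      exact absurd hab.symm (ne_of_lt (hrlt b a h' (by omega)))
  have hLmem : ∀ a ∈ L, a ∈ F.roots := by
    intro a ha
    rw [hLdef, List.mem_ofFn] at ha
    obtain ⟨t, rfl⟩ := ha
    exact hrmem t (by omega)
  have hLle : (↑L : Multiset ℝ) ≤ F.roots := by
    rw [Multiset.le_iff_count]
    intro a
    by_cases ha : a ∈ L
    · have h1 : Multiset.count a (↑L : Multiset ℝ) = 1 := by
        rw [Multiset.coe_count]
        exact List.count_eq_one_of_mem hLnodup ha
      rw [h1]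
      rw [Multiset.one_le_count_iff_mem]
      exact hLmem a ha
    · have h1 : Multiset.count a (↑L : Multiset ℝ) = 0 := by
        rw [Multiset.coe_count]
        exact List.count_eq_zero_of_not_mem ha
      rw [h1]; omega
  have hcardle : Multiset.card F.roots ≤ n + 1 := by
    have := Polynomial.card_roots' F
    rwa [hdF] at this
  have hRe : (↑L : Multiset ℝ) = F.roots := by
    apply Multiset.eq_of_le_of_card_le hLle
    have h1 : Multiset.card (↑L : Multiset ℝ) = n + 1 := by
      rw [Multiset.coe_card, hLlen]
    rw [h1]
    exact hcardle
  have hcard : Multiset.card F.roots = n + 1 := by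
    rw [← hRe, Multiset.coe_card, hLlen]
  have hsortL : F.roots.sort (· ≤ ·) = L := by
    apply List.Perm.eq_of_pairwise' (Multiset.pairwise_sort _ _) hLsorted
    rw [← Multiset.coe_eq_coe, Multiset.sort_eq, hRe]
  have hrhoF : ∀ j, j < n + 1 → rho F.roots j = r j := by
    intro j hj
    rw [rho, hsortL, hLdef]
    have hlen : j < (List.ofFn fun t : Fin (n+1) => r ↑t).length := by
      rw [List.length_ofFn]; omega
    rw [List.getD_eq_getElem _ _ hlen, List.getElem_ofFn]
  refine ⟨hcard, ?_⟩
  intro j hj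
  have hrj := hrhoF j hj
  have hIoo := hrIoo j (by omega)
  constructor
  · -- ∃ i, rho (f i).roots j ≤ rho F.roots j
    rw [hrj]
    by_contra hcon
    push_neg at hcon
    set x := r j with hxdef
    have hsigx : ∀ i, (f i).eval x = 0 ∨ 0 < (-1:ℝ)^(n+1-j) * (f i).eval x := by
      intro i
      have hLEi : cntLE (f i).roots x ≤ j := by
        by_contra hgt
        push_neg at hgt
        exact absurd ((rho_le_iff (by rw [hr i]; omega)).mpr hgt) (not_le.mpr (hcon i))
      have hLTi : j ≤ cntLT (f i).roots x := by
        rcases Nat.eq_zero_or_pos j with rfl | hjpos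
        · omega
        · have h1 : rho (f i).roots (j-1) ≤ α (j-1) := (hint i (j-1) (by omega)).1
          have h2 : j - 1 < cntLE (f i).roots (α (j-1)) :=
            (rho_le_iff (by rw [hr i]; omega)).mp h1
          have h3 : α (j-1) < x := by
            have h5 := hIoo.1
            rwa [hcmid j hjpos (by omega)] at h5
          have h4 := cntLE_lt_mono (f i).roots h3
          omega
      have hLTi' : cntLT (f i).roots x ≤ j := le_trans (cntLT_le_cntLE _ _) hLEi
      have hLEi' : j ≤ cntLE (f i).roots x := le_trans hLTi (cntLT_le_cntLE _ _)
      exact sign_cases (hm i) (hd i) (hr i) (by omega : j + (n+1-j) = n+1) hLEi' hLTi'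
    have h0 : F.eval x = 0 := hr0 j (by omega)
    have hall := (sum_sign f x (n+1-j) hsigx).1 h0
    obtain ⟨i, hi⟩ := hnc x
    exact hi (hall i)
  · -- ∃ i, rho F.roots j ≤ rho (f i).roots j
    rw [hrj]
    by_contra hcon
    push_neg at hcon
    set x := r j with hxdef
    have hsigx : ∀ i, (f i).eval x = 0 ∨ 0 < (-1:ℝ)^(n-j) * (f i).eval x := by
      intro i
      have hLEi : j + 1 ≤ cntLE (f i).roots x :=
        (rho_le_iff (by rw [hr i]; omega)).mp (le_of_lt (hcon i))
      have hLTi : cntLT (f i).roots x ≤ j + 1 := by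
        rcases Nat.lt_or_ge j n with hjn | hjn
        · have h1 : α j ≤ rho (f i).roots (j+1) := (hint i j hjn).2
          have h2 : cntLT (f i).roots (α j) ≤ j + 1 :=
            (le_rho_iff (by rw [hr i]; omega)).mp h1
          have h3 : x ≤ α j := by
            have h5 := hIoo.2
            have hcj : c (j+1) = α j := by
              rw [hcmid (j+1) (by omega) (by omega)]
              simp
            rw [hcj] at h5
            exact le_of_lt h5
          exact le_trans (cntLT_mono (f i).roots h3) h2
        · have : j = n := by omega
          rw [this]
          have := cntLT_le_card (f i).roots x
          rw [hr i] at this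
          omega
      exact sign_cases (hm i) (hd i) (hr i) (by omega : (j+1) + (n-j) = n+1) hLEi hLTi
    have h0 : F.eval x = 0 := hr0 j (by omega)
    have hall := (sum_sign f x (n-j) hsigx).1 h0
    obtain ⟨i, hi⟩ := hnc x
    exact hi (hall i)

theorem mainS : ∀ n k, 0 < k → ∀ (f : Fin k → Polynomial ℝ), (∀ i, (f i).Monic) →
    (∀ i, (f i).natDegree = n) → (∀ i, Multiset.card (f i).roots = n) →
    ∀ (α : ℕ → ℝ), (∀ j j', j ≤ j' → j' + 1 < n → α j ≤ α j') →
    (∀ i j, j + 1 < n → rho (f i).roots j ≤ α j ∧ α j ≤ rho (f i).roots (j+1)) →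
    Multiset.card (∑ i, f i).roots = n ∧
    ∀ j, j < n → (∃ i, rho (f i).roots j ≤ rho (∑ i, f i).roots j) ∧
                 (∃ i, rho (∑ i, f i).roots j ≤ rho (f i).roots j) := by
  intro n
  induction n with
  | zero =>
    intro k hk f hm hd hr α hmono hint
    have hone : ∀ i, f i = 1 := fun i => ((hm i).natDegree_eq_zero).mp (hd i)
    have hF : (∑ i, f i) = C ((k : ℝ)) := by
      rw [Finset.sum_congr rfl (fun i _ => hone i)]
      simp [Polynomial.C_eq_natCast]
    constructor
    · rw [hF, Polynomial.roots_C]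
      simp
    · intro j hj; omega
  | succ n ih =>
    intro k hk f hm hd hr α hmono hint
    have i0 : Fin k := ⟨0, hk⟩
    by_cases hcom : ∃ v, ∀ i, (f i).eval v = 0
    · obtain ⟨v, hv⟩ := hcom
      set h : Fin k → Polynomial ℝ := fun i => (f i) /ₘ (X - C v) with hhdef
      have hfac : ∀ i, f i = (X - C v) * h i := by
        intro i
        have hdvd : (X - C v) ∣ f i := dvd_iff_isRoot.mpr (hv i)
        have hmod : (f i) %ₘ (X - C v) = 0 :=
          (Polynomial.modByMonic_eq_zero_iff_dvd (monic_X_sub_C v)).mpr hdvd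
        have h2 := Polynomial.modByMonic_add_div (f i) (X - C v)
        rw [hmod, zero_add] at h2
        exact h2.symm
      have hhne : ∀ i, h i ≠ 0 := by
        intro i h0
        have h2 := hfac i
        rw [h0, mul_zero] at h2
        exact (hm i).ne_zero h2
      have hdegh : ∀ i, (h i).natDegree = n := by
        intro i
        have h2 : (f i).natDegree = 1 + (h i).natDegree := by
          rw [hfac i, Polynomial.natDegree_mul (X_sub_C_ne_zero v) (hhne i), natDegree_X_sub_C]
        rw [hd i] at h2
        omega
      have hmonh : ∀ i, (h i).Monic := by
        intro i
        have h2 := hm i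
        rw [hfac i] at h2
        exact (monic_X_sub_C v).of_mul_monic_left h2
      have hrootsf : ∀ i, (f i).roots = v ::ₘ (h i).roots := by
        intro i
        rw [hfac i, Polynomial.roots_mul (by rw [← hfac i]; exact (hm i).ne_zero),
          Polynomial.roots_X_sub_C, ← Multiset.singleton_add]
      have hrh : ∀ i, Multiset.card (h i).roots = n := by
        intro i
        have h2 := hr i
        rw [hrootsf i, Multiset.card_cons] at h2
        omega
      set j'0 : ℕ := ((Finset.range n).filter (fun j => α j < v)).card with hj0def
      have hj0le : j'0 ≤ n := by
        rw [hj0def]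
        exact le_trans (Finset.card_filter_le _ _) (le_of_eq (Finset.card_range n))
      have P1 : ∀ m, m < j'0 → α m < v := by
        intro m hm'
        by_contra hge
        push_neg at hge
        have hsub : (Finset.range n).filter (fun j => α j < v) ⊆ Finset.range m := by
          intro j hjmem
          obtain ⟨hjr, hjlt⟩ := Finset.mem_filter.mp hjmem
          rw [Finset.mem_range] at hjr ⊢
          by_contra hge2
          push_neg at hge2
          have : α m ≤ α j := hmono m j hge2 (by omega)
          linarith
        have := Finset.card_le_card hsub
        rw [Finset.card_range] at this
        omega
      have P2 : ∀ m, j'0 ≤ m → m < n → v ≤ α m := by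
        intro m h1 h2
        by_contra hlt
        push_neg at hlt
        have hsub : Finset.range (m+1) ⊆ (Finset.range n).filter (fun j => α j < v) := by
          intro j hjm
          rw [Finset.mem_range] at hjm
          refine Finset.mem_filter.mpr ⟨Finset.mem_range.mpr (by omega), ?_⟩
          exact lt_of_le_of_lt (hmono j m (by omega) (by omega)) hlt
        have := Finset.card_le_card hsub
        rw [Finset.card_range] at this
        omega
      set j' : ℕ := min j'0 (n-1) with hj'def
      set α' : ℕ → ℝ := fun m => if m < j' then α m else α (m+1) with hα'def
      have hmono' : ∀ m m', m ≤ m' → m' + 1 < n → α' m ≤ α' m' := by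
        intro m m' h1 h2
        by_cases hmj : m < j'
        · by_cases hmj' : m' < j'
          · simp only [hα'def, if_pos hmj, if_pos hmj']
            exact hmono m m' h1 (by omega)
          · simp only [hα'def, if_pos hmj, if_neg hmj']
            exact hmono m (m'+1) (by omega) (by omega)
        · have hmj' : ¬ m' < j' := by omega
          simp only [hα'def, if_neg hmj, if_neg hmj']
          exact hmono (m+1) (m'+1) (by omega) (by omega)
      have hint' : ∀ i m, m + 1 < n →
          rho (h i).roots m ≤ α' m ∧ α' m ≤ rho (h i).roots (m+1) := by
        intro i m hm1
        have hcons := hrootsf i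
        constructor
        · by_cases hmj : m < j'
          · have hαv : α m < v := P1 m (lt_of_lt_of_le hmj (min_le_left _ _))
            have h1 : rho (f i).roots m ≤ α m := (hint i m (by omega)).1
            have h2 : m < cntLE (f i).roots (α m) :=
              (rho_le_iff (by rw [hr i]; omega)).mp h1
            have h3 : cntLE (f i).roots (α m)
                = cntLE (h i).roots (α m) + if v ≤ α m then 1 else 0 := by
              rw [hcons, cntLE_cons]
            rw [if_neg (not_le.mpr hαv)] at h3
            have h4 : m < cntLE (h i).roots (α m) := by omega
            have h5 := (rho_le_iff (show m < Multiset.card (h i).roots by rw [hrh i]; omega)).mpr h4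
            simpa [hα'def, if_pos hmj] using h5
          · have h1 : rho (f i).roots (m+1) ≤ α (m+1) := (hint i (m+1) (by omega)).1
            have h2 : m+1 < cntLE (f i).roots (α (m+1)) :=
              (rho_le_iff (by rw [hr i]; omega)).mp h1
            have h3 : cntLE (f i).roots (α (m+1))
                = cntLE (h i).roots (α (m+1)) + if v ≤ α (m+1) then 1 else 0 := by
              rw [hcons, cntLE_cons]
            have h4 : m < cntLE (h i).roots (α (m+1)) := by
              by_cases hb : v ≤ α (m+1) <;> simp [hb] at h3 <;> omega
            have h5 := (rho_le_iff (show m < Multiset.card (h i).roots by rw [hrh i]; omega)).mpr h4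
            simpa [hα'def, if_neg hmj] using h5
        · by_cases hmj : m < j'
          · have hαv : α m < v := P1 m (lt_of_lt_of_le hmj (min_le_left _ _))
            have h1 : α m ≤ rho (f i).roots (m+1) := (hint i m (by omega)).2
            have h2 : cntLT (f i).roots (α m) ≤ m+1 :=
              (le_rho_iff (by rw [hr i]; omega)).mp h1
            have h3 : cntLT (f i).roots (α m)
                = cntLT (h i).roots (α m) + if v < α m then 1 else 0 := by
              rw [hcons, cntLT_cons]
            have h4 : cntLT (h i).roots (α m) ≤ m+1 := by
              by_cases hb : v < α m <;> simp [hb] at h3 <;> omega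
            have h5 := (le_rho_iff (show m+1 < Multiset.card (h i).roots by rw [hrh i]; omega)).mpr h4
            simpa [hα'def, if_pos hmj] using h5
          · by_cases hvx : v < α (m+1)
            · have h1 : α (m+1) ≤ rho (f i).roots (m+2) := (hint i (m+1) (by omega)).2
              have h2 : cntLT (f i).roots (α (m+1)) ≤ m+2 :=
                (le_rho_iff (by rw [hr i]; omega)).mp h1
              have h3 : cntLT (f i).roots (α (m+1))
                  = cntLT (h i).roots (α (m+1)) + 1 := by
                rw [hcons, cntLT_cons, if_pos hvx]
              have h4 : cntLT (h i).roots (α (m+1)) ≤ m+1 := by omega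
              have h5 := (le_rho_iff (show m+1 < Multiset.card (h i).roots by rw [hrh i]; omega)).mpr h4
              simpa [hα'def, if_neg hmj] using h5
            · have hj'm : j' ≤ m := by omega
              have hj'j0 : j' = j'0 := by omega
              have hj0m : j'0 ≤ m := by omega
              have hvm1 : v ≤ α (m+1) := P2 (m+1) (by omega) (by omega)
              have hxv : α (m+1) = v := le_antisymm (not_lt.mp hvx) hvm1
              have hαj0 : α j'0 = v := by
                have l1 : v ≤ α j'0 := P2 j'0 le_rfl (by omega)
                have l2 : α j'0 ≤ α (m+1) := hmono j'0 (m+1) (by omega) (by omega)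
                rw [hxv] at l2
                exact le_antisymm l2 l1
              have h1 : α j'0 ≤ rho (f i).roots (j'0+1) := (hint i j'0 (by omega)).2
              have h2 : cntLT (f i).roots v ≤ j'0 + 1 := by
                have h6 := (le_rho_iff (show j'0+1 < Multiset.card (f i).roots by rw [hr i]; omega)).mp h1
                rwa [hαj0] at h6
              have h3 : cntLT (f i).roots v = cntLT (h i).roots v := by
                rw [hcons, cntLT_cons, if_neg (lt_irrefl v), add_zero]
              have h4 : cntLT (h i).roots (α (m+1)) ≤ m+1 := by
                rw [hxv]; omega
              have h5 := (le_rho_iff (show m+1 < Multiset.card (h i).roots by rw [hrh i]; omega)).mpr h4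
              simpa [hα'def, if_neg hmj] using h5
      obtain ⟨hcardH, hcompH⟩ := ih k hk h hmonh hdegh hrh α' hmono' hint'
      obtain ⟨hdF, hFne⟩ := sum_deg hk f hm hd
      have hFfac : (∑ i, f i) = (X - C v) * (∑ i, h i) := by
        rw [Finset.mul_sum]
        exact Finset.sum_congr rfl (fun i _ => hfac i)
      have hrootsF : (∑ i, f i).roots = v ::ₘ (∑ i, h i).roots := by
        rw [hFfac, Polynomial.roots_mul (by rw [← hFfac]; exact hFne),
          Polynomial.roots_X_sub_C, ← Multiset.singleton_add]
      have hcardF : Multiset.card (∑ i, f i).roots = n + 1 := by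
        rw [hrootsF, Multiset.card_cons, hcardH]
      refine ⟨hcardF, ?_⟩
      intro j hj
      set T := rho (∑ i, f i).roots j with hTdef
      constructor
      · have hTT : j < cntLE (∑ i, f i).roots T :=
          (rho_le_iff (by rw [hcardF]; omega)).mp le_rfl
        rw [hrootsF, cntLE_cons] at hTT
        by_cases hvT : v ≤ T
        · rw [if_pos hvT] at hTT
          rcases Nat.eq_zero_or_pos j with rfl | hjpos
          · refine ⟨i0, (rho_le_iff (by rw [hr i0]; omega)).mpr ?_⟩
            rw [hrootsf i0, cntLE_cons, if_pos hvT]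
            omega
          · have hρ : rho (∑ i, h i).roots (j-1) ≤ T :=
              (rho_le_iff (by rw [hcardH]; omega)).mpr (by omega)
            obtain ⟨i, hi⟩ := (hcompH (j-1) (by omega)).1
            refine ⟨i, (rho_le_iff (by rw [hr i]; omega)).mpr ?_⟩
            rw [hrootsf i, cntLE_cons, if_pos hvT]
            have h6 : j - 1 < cntLE (h i).roots T :=
              (rho_le_iff (by rw [hrh i]; omega)).mp (le_trans hi hρ)
            omega
        · rw [if_neg hvT] at hTT
          have hjn : j < n := by
            have := cntLE_le_card (∑ i, h i).roots T
            rw [hcardH] at this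
            omega
          have hρ : rho (∑ i, h i).roots j ≤ T :=
            (rho_le_iff (by rw [hcardH]; omega)).mpr (by omega)
          obtain ⟨i, hi⟩ := (hcompH j hjn).1
          refine ⟨i, (rho_le_iff (by rw [hr i]; omega)).mpr ?_⟩
          rw [hrootsf i, cntLE_cons]
          have h6 : j < cntLE (h i).roots T :=
            (rho_le_iff (by rw [hrh i]; omega)).mp (le_trans hi hρ)
          split <;> omega
      · have hTT : cntLT (∑ i, f i).roots T ≤ j :=
          (le_rho_iff (by rw [hcardF]; omega)).mp le_rfl
        rw [hrootsF, cntLT_cons] at hTT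
        by_cases hvT : v < T
        · rw [if_pos hvT] at hTT
          have hjpos : 1 ≤ j := by omega
          have hρ : T ≤ rho (∑ i, h i).roots (j-1) :=
            (le_rho_iff (by rw [hcardH]; omega)).mpr (by omega)
          obtain ⟨i, hi⟩ := (hcompH (j-1) (by omega)).2
          refine ⟨i, (le_rho_iff (by rw [hr i]; omega)).mpr ?_⟩
          rw [hrootsf i, cntLT_cons, if_pos hvT]
          have h6 : cntLT (h i).roots T ≤ j - 1 :=
            (le_rho_iff (by rw [hrh i]; omega)).mp (le_trans hρ hi)
          omega
        · rw [if_neg hvT] at hTT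
          rcases Nat.lt_or_ge j n with hjn | hjn
          · have hρ : T ≤ rho (∑ i, h i).roots j :=
              (le_rho_iff (by rw [hcardH]; omega)).mpr (by omega)
            obtain ⟨i, hi⟩ := (hcompH j hjn).2
            refine ⟨i, (le_rho_iff (by rw [hr i]; omega)).mpr ?_⟩
            rw [hrootsf i, cntLT_cons, if_neg hvT]
            have h6 : cntLT (h i).roots T ≤ j :=
              (le_rho_iff (by rw [hrh i]; omega)).mp (le_trans hρ hi)
            omega
          · refine ⟨i0, (le_rho_iff (by rw [hr i0]; omega)).mpr ?_⟩
            rw [hrootsf i0, cntLT_cons, if_neg hvT]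
            have := cntLT_le_card (h i0).roots T
            rw [hrh i0] at this
            omega
    · push_neg at hcom
      exact case2 hk f hm hd hr α (fun j j' h1 h2 => hmono j j' h1 (by omega))
        (fun i j hjn => hint i j (by omega)) hcom
end CI

/-- If `f₁,…,f_k` are monic real-rooted degree-`n` polynomials with a common
interlacing and `f = f₁ + ⋯ + f_k`, then `f` is real-rooted and for each `ℓ ∈ [n]` some
`f_i` has its `ℓ`-th largest root at most that of `f`, and some `f_j` has its `ℓ`-th
largest root at least that of `f`. -/
theorem common_interlacing_root_comparison
    (k n : ℕ) (hk : 0 < k) (f : Fin k → Polynomial ℝ)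
    (hmonic : ∀ i, (f i).Monic)
    (hdeg : ∀ i, (f i).natDegree = n)
    (hroots : ∀ i, RealRooted (f i))
    (hcommon : ∃ g, ∀ i, Interlaces g (f i)) :
    RealRooted (∑ i, f i) ∧
      ∀ ℓ, 1 ≤ ℓ → ℓ ≤ n →
        (∃ i, nthLargestRoot (f i) ℓ ≤ nthLargestRoot (∑ i, f i) ℓ) ∧
        (∃ j, nthLargestRoot (∑ i, f i) ℓ ≤ nthLargestRoot (f j) ℓ) := by
  obtain ⟨g, hg⟩ := hcommon
  have i0 : Fin k := ⟨0, hk⟩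
  have hgdeg := (hg i0).2.2.1
  rw [hdeg i0] at hgdeg
  have hgcard : Multiset.card g.roots = g.natDegree := (hg i0).1
  have hr' : ∀ i, Multiset.card (f i).roots = n := fun i => by
    have := hroots i
    rw [RealRooted] at this
    rw [this, hdeg i]
  set α : ℕ → ℝ := fun j => CI.rho g.roots j with hαdef
  have hmono : ∀ j j', j ≤ j' → j' + 1 < n → α j ≤ α j' := by
    intro j j' h1 h2
    exact CI.rho_mono h1 (by rw [hgcard]; omega)
  have hint : ∀ i j, j + 1 < n →
      CI.rho (f i).roots j ≤ α j ∧ α j ≤ CI.rho (f i).roots (j+1) := by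
    intro i j hj
    obtain ⟨ha, hb⟩ := (hg i).2.2.2 j (by omega)
    exact ⟨ha, hb⟩
  obtain ⟨hcard, hcomp⟩ := CI.mainS n k hk f hmonic hdeg hr' α hmono hint
  have hdF := (CI.sum_deg hk f hmonic hdeg).1
  have hnth : ∀ (p : Polynomial ℝ) (ℓ : ℕ),
      nthLargestRoot p ℓ = CI.rho p.roots (Multiset.card p.roots - ℓ) := fun p ℓ => rfl
  constructor
  · rw [RealRooted, hcard, hdF]
  · intro ℓ h1 h2
    have hj : n - ℓ < n := by omega
    obtain ⟨⟨i, hi⟩, ⟨i2, hi2⟩⟩ := hcomp (n - ℓ) hj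
    constructor
    · refine ⟨i, ?_⟩
      rw [hnth, hnth, hr' i, hcard]
      exact hi
    · refine ⟨i2, ?_⟩
      rw [hnth, hnth, hr' i2, hcard]
      exact hi2
end
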